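/- For every d \geq 1, N_2(d) \leq 2 N_2(d-1), where N_2(d) is the maximal number of vertices of a 2-neighborly 0/1-polytope of dimension at most d (in R^d). -/

import Mathlib

/-- The set of vertices of the 0/1-cube in `ℝ^d`. -/
def cubeVerts (d : ℕ) : Set (Fin d → ℝ) := {x | ∀ i, x i = 0 ∨ x i = 1}

/-- `X` spans a 2-neighborly polytope: every pair of distinct points of `X`
forms an edge (1-face) of `conv X`. -/
def TwoNeighborly {d : ℕ} (X : Set (Fin d → ℝ)) : Prop :=
  ∀ u ∈ X, ∀ v ∈ X, u ≠ v → IsExtreme ℝ (convexHull ℝ X) (segment ℝ u v)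

/-- `N₂ d`: the maximal number of vertices of a 2-neighborly 0/1-polytope in `ℝ^d`. -/
noncomputable def N2 (d : ℕ) : ℕ :=
  sSup {n : ℕ | ∃ X : Finset (Fin d → ℝ),
    ↑X ⊆ cubeVerts d ∧ TwoNeighborly (↑X : Set (Fin d → ℝ)) ∧ X.card = n}

namespace Stmt5Aux

/-- Projection forgetting the last coordinate, as a linear map. -/
noncomputable def proj (n : ℕ) : (Fin (n + 1) → ℝ) →ₗ[ℝ] (Fin n → ℝ) :=
  LinearMap.funLeft ℝ ℝ Fin.castSucc

lemma proj_apply {n : ℕ} (x : Fin (n + 1) → ℝ) (j : Fin n) :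
    proj n x j = x j.castSucc := rfl

/-- If all points of `Y` have last coordinate `c`, projecting away the last
coordinate preserves 2-neighborliness. -/
lemma twoNeighborly_image {n : ℕ} (c : ℝ) (Y : Set (Fin (n + 1) → ℝ))
    (hY : ∀ x ∈ Y, x (Fin.last n) = c) (h : TwoNeighborly Y) :
    TwoNeighborly (proj n '' Y) := by
  have hconv : convexHull ℝ Y ⊆ {x | x (Fin.last n) = c} := by
    apply convexHull_min hY
    exact convex_hyperplane (LinearMap.proj (Fin.last n) :
      (Fin (n + 1) → ℝ) →ₗ[ℝ] ℝ).isLinear c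
  intro u' hu' v' hv' hne
  obtain ⟨u, hu, rfl⟩ := hu'
  obtain ⟨v, hv, rfl⟩ := hv'
  have huv : u ≠ v := fun e => hne (by rw [e])
  have hE := h u hu v hv huv
  have hseg : segment ℝ (proj n u) (proj n v) = proj n '' segment ℝ u v :=
    (image_segment ℝ (proj n).toAffineMap u v).symm
  have hch : convexHull ℝ (proj n '' Y) = proj n '' convexHull ℝ Y :=
    ((proj n).image_convexHull Y).symm
  constructor
  · rw [hseg, hch]
    exact Set.image_mono hE.1
  · intro x1 hx1 x2 hx2 b' hb' hbopen
    rw [hch] at hx1 hx2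
    obtain ⟨a1, ha1, rfl⟩ := hx1
    obtain ⟨a2, ha2, rfl⟩ := hx2
    rw [hseg] at hb'
    obtain ⟨b, hb, rfl⟩ := hb'
    obtain ⟨t1, t2, ht1, ht2, hsum, heq⟩ := hbopen
    have hbY : b ∈ convexHull ℝ Y := hE.1 hb
    have hb2 : b = t1 • a1 + t2 • a2 := by
      funext i
      refine Fin.lastCases ?_ ?_ i
      · have hbc : b (Fin.last n) = c := hconv hbY
        have h1 : a1 (Fin.last n) = c := hconv ha1
        have h2 : a2 (Fin.last n) = c := hconv ha2
        simp only [Pi.add_apply, Pi.smul_apply, smul_eq_mul, hbc, h1, h2]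
        ring_nf
        linear_combination (c : ℝ) * hsum.symm
      · intro j
        have := congrFun heq j
        simp only [Pi.add_apply, Pi.smul_apply, smul_eq_mul, proj_apply] at this ⊢
        linarith [this]
    have hbop : b ∈ openSegment ℝ a1 a2 := ⟨t1, t2, ht1, ht2, hsum, hb2.symm⟩
    have h1 := hE.2 ha1 ha2 hb hbop
    rw [hseg]; exact ⟨a1, h1, rfl⟩

lemma bddAbove_N2set (d : ℕ) :
    BddAbove {n : ℕ | ∃ X : Finset (Fin d → ℝ),
      ↑X ⊆ cubeVerts d ∧ TwoNeighborly (↑X : Set (Fin d → ℝ)) ∧ X.card = n} := by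
  have hfin : (cubeVerts d).Finite := by
    have hsub : cubeVerts d ⊆ Set.pi Set.univ (fun _ : Fin d => ({0, 1} : Set ℝ)) := by
      intro x hx i _
      rcases hx i with h | h <;> simp [h]
    exact (Set.Finite.pi fun i => (Set.finite_singleton (1 : ℝ)).insert 0).subset hsub
  refine ⟨hfin.toFinset.card, ?_⟩
  rintro m ⟨X, hX, _, rfl⟩
  apply Finset.card_le_card
  intro x hx
  exact hfin.mem_toFinset.2 (hX hx)

/-- Count of a slice: a 2-neighborly set of cube vertices with constant last
coordinate has at most `N2 n` points. -/
lemma slice_card_le {n : ℕ} (c : ℝ) (X' : Finset (Fin (n + 1) → ℝ))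
    (hX' : ↑X' ⊆ cubeVerts (n + 1)) (h0 : ∀ x ∈ X', x (Fin.last n) = c)
    (hTN : TwoNeighborly (↑X' : Set (Fin (n + 1) → ℝ))) : X'.card ≤ N2 n := by
  set Y : Finset (Fin n → ℝ) := X'.image (proj n) with hYdef
  have hinj : Set.InjOn (proj n) ↑X' := by
    intro a ha b hb hab
    funext i
    refine Fin.lastCases ?_ ?_ i
    · rw [h0 a ha, h0 b hb]
    · intro j
      exact congrFun hab j
  have hcard : Y.card = X'.card := Finset.card_image_of_injOn hinj
  have hsub : ↑Y ⊆ cubeVerts n := by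
    intro y hy
    rw [hYdef, Finset.coe_image] at hy
    obtain ⟨x, hx, rfl⟩ := hy
    intro j
    exact hX' hx j.castSucc
  have hTNY : TwoNeighborly (↑Y : Set (Fin n → ℝ)) := by
    rw [hYdef, Finset.coe_image]
    exact twoNeighborly_image c _ h0 hTN
  have : X'.card ∈ {m : ℕ | ∃ X : Finset (Fin n → ℝ),
      ↑X ⊆ cubeVerts n ∧ TwoNeighborly (↑X : Set (Fin n → ℝ)) ∧ X.card = m} :=
    ⟨Y, hsub, hTNY, hcard⟩
  exact le_csSup (bddAbove_N2set n) this

lemma twoNeighborly_subset {d : ℕ} {X X' : Finset (Fin d → ℝ)} (hsub : X' ⊆ X)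
    (hTN : TwoNeighborly (↑X : Set (Fin d → ℝ))) :
    TwoNeighborly (↑X' : Set (Fin d → ℝ)) := by
  intro u hu v hv hne
  have hE := hTN u (hsub hu) v (hsub hv) hne
  exact hE.mono (convexHull_mono (Finset.coe_subset.2 hsub))
    (segment_subset_convexHull hu hv)

end Stmt5Aux

open Stmt5Aux in
/-- For every `d ≥ 1`, `N₂(d) ≤ 2 · N₂(d-1)`. -/
theorem stmt5 (d : ℕ) (hd : 1 ≤ d) : N2 d ≤ 2 * N2 (d - 1) := by
  obtain ⟨n, rfl⟩ : ∃ n, d = n + 1 := ⟨d - 1, (Nat.succ_pred_eq_of_pos hd).symm⟩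
  simp only [Nat.add_sub_cancel]
  rw [N2]
  apply csSup_le
  · exact ⟨0, ∅, by simp [TwoNeighborly]⟩
  · rintro m ⟨X, hX, hTN, rfl⟩
    set X0 := X.filter (fun x => x (Fin.last n) = 0) with hX0
    set X1 := X.filter (fun x => ¬ x (Fin.last n) = 0) with hX1
    have hsplit : X0.card + X1.card = X.card :=
      Finset.card_filter_add_card_filter_not _
    have h0 : X0.card ≤ N2 n := by
      refine slice_card_le 0 X0 (fun x hx => hX (Finset.filter_subset _ _ hx)) ?_
        (twoNeighborly_subset (Finset.filter_subset _ _) hTN)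
      intro x hx
      exact (Finset.mem_filter.1 hx).2
    have h1 : X1.card ≤ N2 n := by
      refine slice_card_le 1 X1 (fun x hx => hX (Finset.filter_subset _ _ hx)) ?_
        (twoNeighborly_subset (Finset.filter_subset _ _) hTN)
      intro x hx
      have hm := Finset.mem_filter.1 hx
      rcases hX hm.1 (Fin.last n) with h | h
      · exact absurd h hm.2
      · exact h
    omega
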